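/- The group of isometries of Z⁷ (with orthonormal basis η₀,...,η₆) preserving the subgroup P generated by η₀+η₃+η₄+η₅, η₁+η₃+η₄+η₆, η₂+η₃+η₅+η₆ is generated by −Id together with the signed permutations (0,1,2)(4,6,5), (1,2)(4,5), and (2,−3)(5,−6), where (i,−j) means ηᵢ ↦ −ηⱼ and ηⱼ ↦ −ηᵢ. -/

import Mathlib

/-- The standard inner product on `ℤ⁷`. -/
def dot (x y : Fin 7 → ℤ) : ℤ := ∑ i, x i * y i

/-- The orthonormal basis `η₀, …, η₆` of `ℤ⁷`. -/
def eta (i : Fin 7) : Fin 7 → ℤ := Pi.single i 1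

/-- Characters of the three projective indecomposable modules. -/
def p0 : Fin 7 → ℤ := eta 0 + eta 3 + eta 4 + eta 5
def p1 : Fin 7 → ℤ := eta 1 + eta 3 + eta 4 + eta 6
def p2 : Fin 7 → ℤ := eta 2 + eta 3 + eta 5 + eta 6

/-- The subgroup `P` of `ℤ⁷` generated by `p₀, p₁, p₂`. -/
def P : Submodule ℤ (Fin 7 → ℤ) := Submodule.span ℤ {p0, p1, p2}

/-- The signed permutation of `ℤ⁷` sending `η_i` to `ε(σ⁻¹ i) • η_{σ⁻¹ i}`. -/
def sgnPerm (σ : Equiv.Perm (Fin 7)) (ε : Fin 7 → ℤˣ) : (Fin 7 → ℤ) ≃ₗ[ℤ] (Fin 7 → ℤ) where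
  toFun x := fun j => (ε j : ℤ) * x (σ j)
  invFun x := fun j => (ε (σ⁻¹ j) : ℤ) * x (σ⁻¹ j)
  left_inv x := funext fun j => by
    simp only [Equiv.Perm.inv_def, Equiv.apply_symm_apply, ← mul_assoc, ← Units.val_mul, Int.units_mul_self,
      Units.val_one, one_mul]
  right_inv x := funext fun j => by
    simp only [Equiv.Perm.inv_def, Equiv.symm_apply_apply, ← mul_assoc, ← Units.val_mul, Int.units_mul_self,
      Units.val_one, one_mul]
  map_add' x y := funext fun j => by simp [mul_add]
  map_smul' c x := funext fun j => by simp [Pi.smul_apply, smul_eq_mul]; ring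

/-- The signed permutation `(0,1,2)(4,6,5)` (as a map `η_i ↦ η_{π i}`). -/
def g1 : (Fin 7 → ℤ) ≃ₗ[ℤ] (Fin 7 → ℤ) :=
  sgnPerm (Equiv.mk (![2,0,1,3,5,6,4] ·) (![1,2,0,3,6,4,5] ·) (by decide) (by decide))
    (fun _ => 1)

/-- The signed permutation `(1,2)(4,5)`. -/
def g2 : (Fin 7 → ℤ) ≃ₗ[ℤ] (Fin 7 → ℤ) :=
  sgnPerm (Equiv.mk (![0,2,1,3,5,4,6] ·) (![0,2,1,3,5,4,6] ·) (by decide) (by decide))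
    (fun _ => 1)

/-- The signed permutation `(2,−3)(5,−6)`: `η₂ ↦ −η₃`, `η₃ ↦ −η₂`, `η₅ ↦ −η₆`, `η₆ ↦ −η₅`. -/
def g3 : (Fin 7 → ℤ) ≃ₗ[ℤ] (Fin 7 → ℤ) :=
  sgnPerm (Equiv.mk (![0,1,3,2,4,6,5] ·) (![0,1,3,2,4,6,5] ·) (by decide) (by decide))
    (fun j => if j = 2 ∨ j = 3 ∨ j = 5 ∨ j = 6 then -1 else 1)

/-- `−Id`. -/
def gneg : (Fin 7 → ℤ) ≃ₗ[ℤ] (Fin 7 → ℤ) := sgnPerm 1 (fun _ => -1)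

set_option maxRecDepth 4000

lemma sgnPerm_apply (σ : Equiv.Perm (Fin 7)) (ε : Fin 7 → ℤˣ) (x : Fin 7 → ℤ) :
    sgnPerm σ ε x = fun j => (ε j : ℤ) * x (σ j) := rfl

lemma memP_iff (x : Fin 7 → ℤ) : x ∈ P ↔
    (x 3 = x 0 + x 1 + x 2 ∧ x 4 = x 0 + x 1 ∧ x 5 = x 0 + x 2 ∧ x 6 = x 1 + x 2) := by
  constructor
  · intro hx
    induction hx using Submodule.span_induction with
    | mem y hy =>
      rcases hy with rfl | rfl | rfl <;> refine ⟨by decide, by decide, by decide, by decide⟩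
    | zero => exact ⟨rfl, rfl, rfl, rfl⟩
    | add y z _ _ hy hz =>
      exact ⟨by simp [Pi.add_apply]; omega, by simp [Pi.add_apply]; omega,
        by simp [Pi.add_apply]; omega, by simp [Pi.add_apply]; omega⟩
    | smul c y _ hy =>
      refine ⟨?_, ?_, ?_, ?_⟩ <;> simp only [Pi.smul_apply, smul_eq_mul] <;>
        [rw [hy.1]; rw [hy.2.1]; rw [hy.2.2.1]; rw [hy.2.2.2]] <;> ring
  · rintro ⟨h3, h4, h5, h6⟩
    have hx : x = x 0 • p0 + x 1 • p1 + x 2 • p2 := by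
      funext j
      fin_cases j <;>
        simp only [Pi.add_apply, Pi.smul_apply, smul_eq_mul] <;>
        simp [p0, p1, p2, eta, Pi.single_apply] <;> omega
    rw [hx]
    have m0 : p0 ∈ P := Submodule.subset_span (by simp)
    have m1 : p1 ∈ P := Submodule.subset_span (by simp)
    have m2 : p2 ∈ P := Submodule.subset_span (by simp)
    exact add_mem (add_mem (Submodule.smul_mem _ _ m0) (Submodule.smul_mem _ _ m1))
      (Submodule.smul_mem _ _ m2)

example : (g1 p0) 3 = (g1 p0) 0 + (g1 p0) 1 + (g1 p0) 2 := by decide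
example : g1 p0 = p1 := by decide
set_option maxRecDepth 8000 in
lemma keyABC : ∀ a ∈ Finset.Icc (-5:ℤ) 5, ∀ b ∈ Finset.Icc (-5:ℤ) 5, ∀ c ∈ Finset.Icc (-5:ℤ) 5,
    a*a + b*b + c*c + (a+b+c)*(a+b+c) + (a+b)*(a+b) + (a+c)*(a+c) + (b+c)*(b+c) = 24 →
    ((a = 1 ∧ b = 1 ∧ c = 1) ∨ (a = -1 ∧ b = -1 ∧ c = -1) ∨
     (a = 3 ∧ b = -1 ∧ c = -1) ∨ (a = -3 ∧ b = 1 ∧ c = 1) ∨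
     (a = -1 ∧ b = 3 ∧ c = -1) ∨ (a = 1 ∧ b = -3 ∧ c = 1) ∨
     (a = -1 ∧ b = -1 ∧ c = 3) ∨ (a = 1 ∧ b = 1 ∧ c = -3)) := by decide

set_option maxRecDepth 8000 in
set_option synthInstance.maxSize 2000 in
set_option synthInstance.maxHeartbeats 2000000 in
set_option maxHeartbeats 2000000 in
lemma keyFin : ∀ t0 ∈ ({0,1,2} : Finset (Fin 7)), ∀ t1 ∈ ({0,1,2} : Finset (Fin 7)),
    ∀ t2 ∈ ({0,1,2} : Finset (Fin 7)), ∀ t4 ∈ ({4,5,6} : Finset (Fin 7)),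
    ∀ t5 ∈ ({4,5,6} : Finset (Fin 7)), ∀ t6 ∈ ({4,5,6} : Finset (Fin 7)),
    t0 ≠ t1 → t0 ≠ t2 → t1 ≠ t2 → t4 ≠ t5 → t4 ≠ t6 → t5 ≠ t6 →
    (p0 t4 = p0 t0 + p0 t1 ∧ p0 t5 = p0 t0 + p0 t2 ∧ p0 t6 = p0 t1 + p0 t2) →
    (p1 t4 = p1 t0 + p1 t1 ∧ p1 t5 = p1 t0 + p1 t2 ∧ p1 t6 = p1 t1 + p1 t2) →
    (p2 t4 = p2 t0 + p2 t1 ∧ p2 t5 = p2 t0 + p2 t2 ∧ p2 t6 = p2 t1 + p2 t2) →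
    ((t0 = 0 ∧ t1 = 1 ∧ t2 = 2 ∧ t4 = 4 ∧ t5 = 5 ∧ t6 = 6) ∨
     (t0 = 0 ∧ t1 = 2 ∧ t2 = 1 ∧ t4 = 5 ∧ t5 = 4 ∧ t6 = 6) ∨
     (t0 = 1 ∧ t1 = 0 ∧ t2 = 2 ∧ t4 = 4 ∧ t5 = 6 ∧ t6 = 5) ∨
     (t0 = 1 ∧ t1 = 2 ∧ t2 = 0 ∧ t4 = 6 ∧ t5 = 4 ∧ t6 = 5) ∨
     (t0 = 2 ∧ t1 = 0 ∧ t2 = 1 ∧ t4 = 5 ∧ t5 = 6 ∧ t6 = 4) ∨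
     (t0 = 2 ∧ t1 = 1 ∧ t2 = 0 ∧ t4 = 6 ∧ t5 = 5 ∧ t6 = 4)) := by decide
lemma mulApply (f g : (Fin 7 → ℤ) ≃ₗ[ℤ] (Fin 7 → ℤ)) (x : Fin 7 → ℤ) : (f * g) x = f (g x) := rfl
lemma invApply (f : (Fin 7 → ℤ) ≃ₗ[ℤ] (Fin 7 → ℤ)) (x : Fin 7 → ℤ) : f⁻¹ x = f.symm x := rfl
lemma mulSymmApply (f g : (Fin 7 → ℤ) ≃ₗ[ℤ] (Fin 7 → ℤ)) (x : Fin 7 → ℤ) :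
    (f * g).symm x = g.symm (f.symm x) := rfl
lemma invSymmApply (f : (Fin 7 → ℤ) ≃ₗ[ℤ] (Fin 7 → ℤ)) (x : Fin 7 → ℤ) : f⁻¹.symm x = f x := rfl

lemma dot_eta : ∀ i j : Fin 7, dot (eta i) (eta j) = if i = j then 1 else 0 := by decide

lemma unit_vec {x : Fin 7 → ℤ} (hx : dot x x = 1) :
    ∃ (j : Fin 7) (u : ℤˣ), x = fun k => if k = j then (u : ℤ) else 0 := by
  obtain ⟨j, hj⟩ : ∃ j, x j ≠ 0 := by
    by_contra hc
    push_neg at hc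
    simp [dot, hc] at hx
  have hsplit : x j * x j + ∑ k ∈ Finset.univ.erase j, x k * x k = 1 := by
    rw [← hx]; exact Finset.add_sum_erase _ (fun k => x k * x k) (Finset.mem_univ j)
  have h1 : 1 ≤ x j * x j := by
    have h := Int.one_le_abs hj
    nlinarith [abs_mul_abs_self (x j), abs_nonneg (x j)]
  have hge : 0 ≤ ∑ k ∈ Finset.univ.erase j, x k * x k :=
    Finset.sum_nonneg fun k _ => mul_self_nonneg _
  have hsq : x j * x j = 1 := by linarith
  have hrest : ∀ k, k ≠ j → x k = 0 := by
    intro k hk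
    have h0 : ∑ k ∈ Finset.univ.erase j, x k * x k = 0 := by linarith
    have := (Finset.sum_eq_zero_iff_of_nonneg (fun k _ => mul_self_nonneg (x k))).mp h0 k
      (Finset.mem_erase.mpr ⟨hk, Finset.mem_univ k⟩)
    nlinarith [this]
  rcases mul_self_eq_one_iff.mp hsq with h | h
  · exact ⟨j, 1, funext fun k => by by_cases hk : k = j <;> simp [hk, h, hrest k]⟩
  · exact ⟨j, -1, funext fun k => by by_cases hk : k = j <;> simp [hk, h, hrest k]⟩

lemma rep (f : (Fin 7 → ℤ) ≃ₗ[ℤ] (Fin 7 → ℤ)) (hd : ∀ x y, dot (f x) (f y) = dot x y) :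
    ∃ σ ε, f = sgnPerm σ ε := by
  have h1 : ∀ i, dot (f (eta i)) (f (eta i)) = 1 := fun i => by
    rw [hd]; simpa using dot_eta i i
  choose t s h using fun i => unit_vec (h1 i)
  have tinj : Function.Injective t := by
    intro i j hij
    by_contra hne
    have h0 : dot (f (eta i)) (f (eta j)) = 0 := by
      rw [hd]; simpa [hne] using dot_eta i j
    rw [h i, h j, hij] at h0
    simp [dot, Finset.sum_ite_eq', mul_ite, ite_mul] at h0
  have tb : Function.Bijective t := Finite.injective_iff_bijective.mp tinj
  set τ := Equiv.ofBijective t tb with hτ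
  have ht : ∀ i, t i = τ i := fun i => rfl
  refine ⟨τ.symm, fun j => s (τ.symm j), ?_⟩
  refine LinearEquiv.ext fun x => funext fun j => ?_
  show f x j = (s (τ.symm j) : ℤ) * x (τ.symm j)
  have hx : x = ∑ i, x i • eta i := by
    funext k
    simp [eta, Pi.single_apply, Finset.sum_apply, mul_ite]
  have hfx : f x = ∑ i, x i • f (eta i) := by
    conv_lhs => rw [hx]
    rw [map_sum]
    simp only [map_smul]
  have hb0 : ∀ b ∈ Finset.univ, b ≠ τ.symm j → (x b • f (eta b)) j = 0 := by
    intro b _ hb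
    have hne : j ≠ t b := by
      intro hh
      exact hb ((τ.symm_apply_apply b).symm.trans (congrArg τ.symm hh.symm))
    rw [Pi.smul_apply, h b]
    simp [hne]
  rw [hfx, Finset.sum_apply,
    Finset.sum_eq_single (τ.symm j) hb0 (fun hmem => absurd (Finset.mem_univ _) hmem),
    Pi.smul_apply, h (τ.symm j)]
  have hj : t (τ.symm j) = j := τ.apply_symm_apply j
  simp [hj, mul_comm]
lemma sgnPerm_dot (σ : Equiv.Perm (Fin 7)) (ε : Fin 7 → ℤˣ) (x y : Fin 7 → ℤ) :
    dot (sgnPerm σ ε x) (sgnPerm σ ε y) = dot x y := by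
  unfold dot
  rw [← Equiv.sum_comp σ (fun i => x i * y i)]
  refine Finset.sum_congr rfl fun j _ => ?_
  have hu : (ε j : ℤ) * (ε j : ℤ) = 1 := by
    rw [← Units.val_mul, Int.units_mul_self, Units.val_one]
  show ((ε j : ℤ) * x (σ j)) * ((ε j : ℤ) * y (σ j)) = x (σ j) * y (σ j)
  linear_combination (x (σ j) * y (σ j)) * hu

def QS : Subgroup ((Fin 7 → ℤ) ≃ₗ[ℤ] (Fin 7 → ℤ)) where
  carrier := {f | (∀ x y, dot (f x) (f y) = dot x y) ∧ (∀ p ∈ P, f p ∈ P) ∧ (∀ p ∈ P, f.symm p ∈ P)}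
  one_mem' := ⟨fun _ _ => rfl, fun _ hp => hp, fun _ hp => hp⟩
  mul_mem' := by
    rintro a b ⟨ha1, ha2, ha3⟩ ⟨hb1, hb2, hb3⟩
    exact ⟨fun x y => by rw [mulApply, mulApply, ha1, hb1],
      fun p hp => by rw [mulApply]; exact ha2 _ (hb2 _ hp),
      fun p hp => by rw [mulSymmApply]; exact hb3 _ (ha3 _ hp)⟩
  inv_mem' := by
    rintro a ⟨h1, h2, h3⟩
    refine ⟨fun x y => ?_, fun p hp => by rw [invApply]; exact h3 _ hp,
      fun p hp => by rw [invSymmApply]; exact h2 _ hp⟩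
    rw [invApply, invApply, ← h1 (a.symm x) (a.symm y), a.apply_symm_apply, a.apply_symm_apply]

lemma mem_QS {f : (Fin 7 → ℤ) ≃ₗ[ℤ] (Fin 7 → ℤ)} : f ∈ QS ↔
    ((∀ x y, dot (f x) (f y) = dot x y) ∧ (∀ p ∈ P, f p ∈ P) ∧ (∀ p ∈ P, f.symm p ∈ P)) :=
  Iff.rfl

lemma presP_of (f : (Fin 7 → ℤ) ≃ₗ[ℤ] (Fin 7 → ℤ)) (h0 : f p0 ∈ P) (h1 : f p1 ∈ P)
    (h2 : f p2 ∈ P) : ∀ p ∈ P, f p ∈ P := by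
  intro p hp
  induction hp using Submodule.span_induction with
  | mem y hy => rcases hy with rfl | rfl | rfl <;> assumption
  | zero => rw [map_zero]; exact zero_mem P
  | add y z _ _ hy hz => rw [map_add]; exact add_mem hy hz
  | smul c y _ hy => rw [map_smul]; exact Submodule.smul_mem _ _ hy

lemma gen_sub_QS : ({gneg, g1, g2, g3} : Set ((Fin 7 → ℤ) ≃ₗ[ℤ] (Fin 7 → ℤ))) ⊆ ↑QS := by
  rintro g hg
  simp only [Set.mem_insert_iff, Set.mem_singleton_iff] at hg
  rcases hg with rfl | rfl | rfl | rfl <;>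
    exact ⟨fun x y => sgnPerm_dot _ _ x y,
      presP_of _ ((memP_iff _).mpr (by decide)) ((memP_iff _).mpr (by decide))
        ((memP_iff _).mpr (by decide)),
      presP_of _ ((memP_iff _).mpr (by decide)) ((memP_iff _).mpr (by decide))
        ((memP_iff _).mpr (by decide))⟩

lemma closure_le_QS : Subgroup.closure {gneg, g1, g2, g3} ≤ QS :=
  (Subgroup.closure_le QS).mpr gen_sub_QS
def wv : Fin 7 → ℤ := ![1,1,1,3,2,2,2]

def vecOf (a b c : ℤ) : Fin 7 → ℤ := ![a,b,c,a+b+c,a+b,a+c,b+c]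

lemma wv_mem : wv ∈ P := (memP_iff wv).mpr (by decide)

lemma mainA (f : (Fin 7 → ℤ) ≃ₗ[ℤ] (Fin 7 → ℤ)) (hf : f ∈ QS) :
    f wv = ![1,1,1,3,2,2,2] ∨ f wv = ![-1,-1,-1,-3,-2,-2,-2] ∨
    f wv = ![3,-1,-1,1,2,2,-2] ∨ f wv = ![-3,1,1,-1,-2,-2,2] ∨
    f wv = ![-1,3,-1,1,2,-2,2] ∨ f wv = ![1,-3,1,-1,-2,2,-2] ∨
    f wv = ![-1,-1,3,1,-2,2,2] ∨ f wv = ![1,1,-3,-1,2,-2,-2] := by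
  obtain ⟨hd, hp, -⟩ := hf
  obtain ⟨h3, h4, h5, h6⟩ := (memP_iff _).mp (hp wv wv_mem)
  have hnorm : dot (f wv) (f wv) = 24 := by rw [hd]; decide
  unfold dot at hnorm
  rw [Fin.sum_univ_seven, h3, h4, h5, h6] at hnorm
  set a := f wv 0 with ha0
  set b := f wv 1 with hb0
  set c := f wv 2 with hc0
  have hfw : f wv = vecOf a b c := by
    funext j
    fin_cases j
    · rfl
    · rfl
    · rfl
    · exact h3
    · exact h4
    · exact h5
    · exact h6
  have hicc : ∀ z : ℤ, z * z ≤ 24 → z ∈ Finset.Icc (-5:ℤ) 5 := by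
    intro z hz
    rw [Finset.mem_Icc]
    constructor <;> nlinarith
  have hA := keyABC a
    (hicc a (by nlinarith [mul_self_nonneg b, mul_self_nonneg c, mul_self_nonneg (a+b+c),
      mul_self_nonneg (a+b), mul_self_nonneg (a+c), mul_self_nonneg (b+c)]))
    b (hicc b (by nlinarith [mul_self_nonneg a, mul_self_nonneg c, mul_self_nonneg (a+b+c),
      mul_self_nonneg (a+b), mul_self_nonneg (a+c), mul_self_nonneg (b+c)]))
    c (hicc c (by nlinarith [mul_self_nonneg a, mul_self_nonneg b, mul_self_nonneg (a+b+c),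
      mul_self_nonneg (a+b), mul_self_nonneg (a+c), mul_self_nonneg (b+c)]))
    (by linarith [hnorm])
  rcases hA with ⟨ha,hb,hc⟩|⟨ha,hb,hc⟩|⟨ha,hb,hc⟩|⟨ha,hb,hc⟩|⟨ha,hb,hc⟩|⟨ha,hb,hc⟩|⟨ha,hb,hc⟩|⟨ha,hb,hc⟩ <;>
    rw [hfw, ha, hb, hc] <;> decide
lemma p0_mem : p0 ∈ P := Submodule.subset_span (by simp)
lemma p1_mem : p1 ∈ P := Submodule.subset_span (by simp)
lemma p2_mem : p2 ∈ P := Submodule.subset_span (by simp)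

lemma W0 : sgnPerm (Equiv.mk (![0,1,2,3,4,5,6] ·) (![0,1,2,3,4,5,6] ·) (by decide) (by decide))
    (fun _ => 1) = 1 := by
  refine LinearEquiv.ext fun x => funext fun j => ?_
  fin_cases j <;> simp [sgnPerm, g1, g2, mulApply] <;> exact congrArg x (by decide)

lemma W12 : sgnPerm (Equiv.mk (![1,0,2,3,4,6,5] ·) (![1,0,2,3,4,6,5] ·) (by decide) (by decide))
    (fun _ => 1) = g1 * g2 := by
  refine LinearEquiv.ext fun x => funext fun j => ?_
  fin_cases j <;> simp [sgnPerm, g1, g2, mulApply] <;> exact congrArg x (by decide)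

lemma W11 : sgnPerm (Equiv.mk (![1,2,0,3,6,4,5] ·) (![2,0,1,3,5,6,4] ·) (by decide) (by decide))
    (fun _ => 1) = g1 * g1 := by
  refine LinearEquiv.ext fun x => funext fun j => ?_
  fin_cases j <;> simp [sgnPerm, g1, g2, mulApply] <;> exact congrArg x (by decide)

lemma W21 : sgnPerm (Equiv.mk (![2,1,0,3,6,5,4] ·) (![2,1,0,3,6,5,4] ·) (by decide) (by decide))
    (fun _ => 1) = g2 * g1 := by
  refine LinearEquiv.ext fun x => funext fun j => ?_
  fin_cases j <;> simp [sgnPerm, g1, g2, mulApply] <;> exact congrArg x (by decide)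
lemma mainB (g : (Fin 7 → ℤ) ≃ₗ[ℤ] (Fin 7 → ℤ)) (hg : g ∈ QS) (hw : g wv = wv) :
    g ∈ Subgroup.closure ({gneg, g1, g2, g3} : Set ((Fin 7 → ℤ) ≃ₗ[ℤ] (Fin 7 → ℤ))) := by
  obtain ⟨σ, ε, rfl⟩ := rep g hg.1
  have hεw : ∀ j, (ε j : ℤ) * wv (σ j) = wv j := fun j => congrFun hw j
  have hwv1 : ∀ k : Fin 7, 1 ≤ wv k := by decide
  have hε : ∀ j, (ε j : ℤ) = 1 := by
    intro j
    rcases Int.units_eq_one_or (ε j) with h | h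
    · rw [h]; rfl
    · exfalso
      have h1 := hεw j
      rw [h] at h1
      simp only [Units.val_neg, Units.val_one, neg_mul, one_mul] at h1
      have := hwv1 (σ j)
      have := hwv1 j
      omega
  have hσw : ∀ j, wv (σ j) = wv j := fun j => by
    have h1 := hεw j; rw [hε j, one_mul] at h1; exact h1
  have key3 : ∀ k : Fin 7, wv k = 3 → k = 3 := by decide
  have key1 : ∀ k : Fin 7, wv k = 1 → k ∈ ({0,1,2} : Finset (Fin 7)) := by decide
  have key2 : ∀ k : Fin 7, wv k = 2 → k ∈ ({4,5,6} : Finset (Fin 7)) := by decide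
  have hσ3 : σ 3 = 3 := key3 _ (by rw [hσw 3]; rfl)
  have m0 : σ 0 ∈ ({0,1,2} : Finset (Fin 7)) := key1 _ (by rw [hσw 0]; rfl)
  have m1 : σ 1 ∈ ({0,1,2} : Finset (Fin 7)) := key1 _ (by rw [hσw 1]; rfl)
  have m2 : σ 2 ∈ ({0,1,2} : Finset (Fin 7)) := key1 _ (by rw [hσw 2]; rfl)
  have m4 : σ 4 ∈ ({4,5,6} : Finset (Fin 7)) := key2 _ (by rw [hσw 4]; rfl)
  have m5 : σ 5 ∈ ({4,5,6} : Finset (Fin 7)) := key2 _ (by rw [hσw 5]; rfl)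
  have m6 : σ 6 ∈ ({4,5,6} : Finset (Fin 7)) := key2 _ (by rw [hσw 6]; rfl)
  have d01 : σ 0 ≠ σ 1 := fun hh => absurd (σ.injective hh) (by decide)
  have d02 : σ 0 ≠ σ 2 := fun hh => absurd (σ.injective hh) (by decide)
  have d12 : σ 1 ≠ σ 2 := fun hh => absurd (σ.injective hh) (by decide)
  have d45 : σ 4 ≠ σ 5 := fun hh => absurd (σ.injective hh) (by decide)
  have d46 : σ 4 ≠ σ 6 := fun hh => absurd (σ.injective hh) (by decide)
  have d56 : σ 5 ≠ σ 6 := fun hh => absurd (σ.injective hh) (by decide)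
  have happ : ∀ (p : Fin 7 → ℤ) (k : Fin 7), (sgnPerm σ ε p) k = p (σ k) := fun p k => by
    show (ε k : ℤ) * p (σ k) = p (σ k)
    rw [hε k, one_mul]
  have hc0 := (memP_iff _).mp (hg.2.1 p0 p0_mem)
  have hc1 := (memP_iff _).mp (hg.2.1 p1 p1_mem)
  have hc2 := (memP_iff _).mp (hg.2.1 p2 p2_mem)
  simp only [happ] at hc0 hc1 hc2
  have hεf : ε = fun _ => 1 := funext fun j => Units.ext (by rw [hε j]; rfl)
  have hk := keyFin (σ 0) m0 (σ 1) m1 (σ 2) m2 (σ 4) m4 (σ 5) m5 (σ 6) m6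
    d01 d02 d12 d45 d46 d56 ⟨hc0.2.1, hc0.2.2.1, hc0.2.2.2⟩
    ⟨hc1.2.1, hc1.2.2.1, hc1.2.2.2⟩ ⟨hc2.2.1, hc2.2.2.1, hc2.2.2.2⟩
  have hg1 : g1 ∈ Subgroup.closure ({gneg, g1, g2, g3} : Set _) :=
    Subgroup.subset_closure (by simp)
  have hg2 : g2 ∈ Subgroup.closure ({gneg, g1, g2, g3} : Set _) :=
    Subgroup.subset_closure (by simp)
  rcases hk with ⟨e0,e1,e2,e4,e5,e6⟩|⟨e0,e1,e2,e4,e5,e6⟩|⟨e0,e1,e2,e4,e5,e6⟩|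
    ⟨e0,e1,e2,e4,e5,e6⟩|⟨e0,e1,e2,e4,e5,e6⟩|⟨e0,e1,e2,e4,e5,e6⟩
  · have hσf : σ = Equiv.mk (![0,1,2,3,4,5,6] ·) (![0,1,2,3,4,5,6] ·) (by decide) (by decide) :=
      Equiv.ext fun j => by fin_cases j <;> first | exact e0.trans (by decide) | exact e1.trans (by decide) | exact e2.trans (by decide) | exact hσ3.trans (by decide) | exact e4.trans (by decide) | exact e5.trans (by decide) | exact e6.trans (by decide)
    rw [hσf, hεf, W0]
    exact one_mem _
  · have hσf : σ = Equiv.mk (![0,2,1,3,5,4,6] ·) (![0,2,1,3,5,4,6] ·) (by decide) (by decide) :=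
      Equiv.ext fun j => by fin_cases j <;> first | exact e0.trans (by decide) | exact e1.trans (by decide) | exact e2.trans (by decide) | exact hσ3.trans (by decide) | exact e4.trans (by decide) | exact e5.trans (by decide) | exact e6.trans (by decide)
    rw [hσf, hεf]
    exact hg2
  · have hσf : σ = Equiv.mk (![1,0,2,3,4,6,5] ·) (![1,0,2,3,4,6,5] ·) (by decide) (by decide) :=
      Equiv.ext fun j => by fin_cases j <;> first | exact e0.trans (by decide) | exact e1.trans (by decide) | exact e2.trans (by decide) | exact hσ3.trans (by decide) | exact e4.trans (by decide) | exact e5.trans (by decide) | exact e6.trans (by decide)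
    rw [hσf, hεf, W12]
    exact mul_mem hg1 hg2
  · have hσf : σ = Equiv.mk (![1,2,0,3,6,4,5] ·) (![2,0,1,3,5,6,4] ·) (by decide) (by decide) :=
      Equiv.ext fun j => by fin_cases j <;> first | exact e0.trans (by decide) | exact e1.trans (by decide) | exact e2.trans (by decide) | exact hσ3.trans (by decide) | exact e4.trans (by decide) | exact e5.trans (by decide) | exact e6.trans (by decide)
    rw [hσf, hεf, W11]
    exact mul_mem hg1 hg1
  · have hσf : σ = Equiv.mk (![2,0,1,3,5,6,4] ·) (![1,2,0,3,6,4,5] ·) (by decide) (by decide) :=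
      Equiv.ext fun j => by fin_cases j <;> first | exact e0.trans (by decide) | exact e1.trans (by decide) | exact e2.trans (by decide) | exact hσ3.trans (by decide) | exact e4.trans (by decide) | exact e5.trans (by decide) | exact e6.trans (by decide)
    rw [hσf, hεf]
    exact hg1
  · have hσf : σ = Equiv.mk (![2,1,0,3,6,5,4] ·) (![2,1,0,3,6,5,4] ·) (by decide) (by decide) :=
      Equiv.ext fun j => by fin_cases j <;> first | exact e0.trans (by decide) | exact e1.trans (by decide) | exact e2.trans (by decide) | exact hσ3.trans (by decide) | exact e4.trans (by decide) | exact e5.trans (by decide) | exact e6.trans (by decide)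
    rw [hσf, hεf, W21]
    exact mul_mem hg2 hg1

/-- The group of isometries of `ℤ⁷` preserving `P` is generated by `−Id` together with
the signed permutations `(0,1,2)(4,6,5)`, `(1,2)(4,5)` and `(2,−3)(5,−6)`. -/
theorem stmt_8 (f : (Fin 7 → ℤ) ≃ₗ[ℤ] (Fin 7 → ℤ)) :
    ((∀ x y, dot (f x) (f y) = dot x y) ∧ (∀ p ∈ P, f p ∈ P) ∧ (∀ p ∈ P, f.symm p ∈ P)) ↔
      f ∈ Subgroup.closure {gneg, g1, g2, g3} := by
  constructor
  · rintro ⟨hd, hp, hs⟩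
    have hf : f ∈ QS := ⟨hd, hp, hs⟩
    have hn : gneg ∈ Subgroup.closure ({gneg, g1, g2, g3} : Set ((Fin 7 → ℤ) ≃ₗ[ℤ] (Fin 7 → ℤ))) :=
      Subgroup.subset_closure (by simp)
    have h1 : g1 ∈ Subgroup.closure ({gneg, g1, g2, g3} : Set ((Fin 7 → ℤ) ≃ₗ[ℤ] (Fin 7 → ℤ))) :=
      Subgroup.subset_closure (by simp)
    have h3 : g3 ∈ Subgroup.closure ({gneg, g1, g2, g3} : Set ((Fin 7 → ℤ) ≃ₗ[ℤ] (Fin 7 → ℤ))) :=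
      Subgroup.subset_closure (by simp)
    rcases mainA f hf with h|h|h|h|h|h|h|h
    · exact mainB f hf h
    · have hu : (gneg) ∈ Subgroup.closure ({gneg, g1, g2, g3} : Set ((Fin 7 → ℤ) ≃ₗ[ℤ] (Fin 7 → ℤ))) := hn
      have hQ : (gneg) * f ∈ QS := mul_mem (closure_le_QS hu) hf
      have hwq : ((gneg) * f) wv = wv := by rw [mulApply, h]; decide
      have hmem := mainB _ hQ hwq
      rw [show f = (gneg)⁻¹ * ((gneg) * f) from (inv_mul_cancel_left _ _).symm]
      exact mul_mem (inv_mem hu) hmem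
    · have hu : (g3 * g1 * g1 * gneg) ∈ Subgroup.closure ({gneg, g1, g2, g3} : Set ((Fin 7 → ℤ) ≃ₗ[ℤ] (Fin 7 → ℤ))) := mul_mem (mul_mem (mul_mem h3 h1) h1) hn
      have hQ : (g3 * g1 * g1 * gneg) * f ∈ QS := mul_mem (closure_le_QS hu) hf
      have hwq : ((g3 * g1 * g1 * gneg) * f) wv = wv := by rw [mulApply, h]; decide
      have hmem := mainB _ hQ hwq
      rw [show f = (g3 * g1 * g1 * gneg)⁻¹ * ((g3 * g1 * g1 * gneg) * f) from (inv_mul_cancel_left _ _).symm]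
      exact mul_mem (inv_mem hu) hmem
    · have hu : (g3 * g1 * g1) ∈ Subgroup.closure ({gneg, g1, g2, g3} : Set ((Fin 7 → ℤ) ≃ₗ[ℤ] (Fin 7 → ℤ))) := mul_mem (mul_mem h3 h1) h1
      have hQ : (g3 * g1 * g1) * f ∈ QS := mul_mem (closure_le_QS hu) hf
      have hwq : ((g3 * g1 * g1) * f) wv = wv := by rw [mulApply, h]; decide
      have hmem := mainB _ hQ hwq
      rw [show f = (g3 * g1 * g1)⁻¹ * ((g3 * g1 * g1) * f) from (inv_mul_cancel_left _ _).symm]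
      exact mul_mem (inv_mem hu) hmem
    · have hu : (g3 * g1 * gneg) ∈ Subgroup.closure ({gneg, g1, g2, g3} : Set ((Fin 7 → ℤ) ≃ₗ[ℤ] (Fin 7 → ℤ))) := mul_mem (mul_mem h3 h1) hn
      have hQ : (g3 * g1 * gneg) * f ∈ QS := mul_mem (closure_le_QS hu) hf
      have hwq : ((g3 * g1 * gneg) * f) wv = wv := by rw [mulApply, h]; decide
      have hmem := mainB _ hQ hwq
      rw [show f = (g3 * g1 * gneg)⁻¹ * ((g3 * g1 * gneg) * f) from (inv_mul_cancel_left _ _).symm]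
      exact mul_mem (inv_mem hu) hmem
    · have hu : (g3 * g1) ∈ Subgroup.closure ({gneg, g1, g2, g3} : Set ((Fin 7 → ℤ) ≃ₗ[ℤ] (Fin 7 → ℤ))) := mul_mem h3 h1
      have hQ : (g3 * g1) * f ∈ QS := mul_mem (closure_le_QS hu) hf
      have hwq : ((g3 * g1) * f) wv = wv := by rw [mulApply, h]; decide
      have hmem := mainB _ hQ hwq
      rw [show f = (g3 * g1)⁻¹ * ((g3 * g1) * f) from (inv_mul_cancel_left _ _).symm]
      exact mul_mem (inv_mem hu) hmem
    · have hu : (g3 * gneg) ∈ Subgroup.closure ({gneg, g1, g2, g3} : Set ((Fin 7 → ℤ) ≃ₗ[ℤ] (Fin 7 → ℤ))) := mul_mem h3 hn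
      have hQ : (g3 * gneg) * f ∈ QS := mul_mem (closure_le_QS hu) hf
      have hwq : ((g3 * gneg) * f) wv = wv := by rw [mulApply, h]; decide
      have hmem := mainB _ hQ hwq
      rw [show f = (g3 * gneg)⁻¹ * ((g3 * gneg) * f) from (inv_mul_cancel_left _ _).symm]
      exact mul_mem (inv_mem hu) hmem
    · have hu : (g3) ∈ Subgroup.closure ({gneg, g1, g2, g3} : Set ((Fin 7 → ℤ) ≃ₗ[ℤ] (Fin 7 → ℤ))) := h3
      have hQ : (g3) * f ∈ QS := mul_mem (closure_le_QS hu) hf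
      have hwq : ((g3) * f) wv = wv := by rw [mulApply, h]; decide
      have hmem := mainB _ hQ hwq
      rw [show f = (g3)⁻¹ * ((g3) * f) from (inv_mul_cancel_left _ _).symm]
      exact mul_mem (inv_mem hu) hmem
  · intro hf
    exact closure_le_QS hf
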